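/- For any integer m ≥ 3, the double integral over the region {0 ≤ x_2 ≤ x_1 ≤ 1} of (1-x_1)^{m-3}(1-x_2)^{m-3} x_1^2 x_2^2 (x_1 - x_2)^2 dx_2 dx_1 equals 12 / (m^2 (m^2-4)(m^2-1)^2). -/

import Mathlib

open MeasureTheory intervalIntegral

lemma beta_nat (n : ℕ) : ∀ k : ℕ, (∫ x in (0:ℝ)..1, x ^ k * (1 - x) ^ n)
    = (Nat.factorial k * Nat.factorial n : ℝ) / Nat.factorial (k + n + 1) := by
  induction n with
  | zero =>
    intro k
    simp only [pow_zero, mul_one, integral_pow, Nat.factorial_zero, Nat.add_zero, Nat.factorial_succ]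
    have h2 : (0:ℝ) < Nat.factorial k := by positivity
    push_cast
    field_simp
    simp
  | succ n ih =>
    intro k
    have h1 : ∀ x ∈ Set.uIcc (0:ℝ) 1, x ^ k * (1 - x) ^ (n+1)
        = x ^ k * (1 - x) ^ n - x ^ (k+1) * (1 - x) ^ n := by
      intro x _; ring
    rw [intervalIntegral.integral_congr h1,
      intervalIntegral.integral_sub
        ((by fun_prop : Continuous fun x:ℝ => x ^ k * (1-x)^n).intervalIntegrable _ _)
        ((by fun_prop : Continuous fun x:ℝ => x ^ (k+1) * (1-x)^n).intervalIntegrable _ _),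
      ih k, ih (k+1)]
    have e1 : k + (n+1) + 1 = (k + n + 1) + 1 := by ring
    have e2 : k + 1 + n + 1 = (k + n + 1) + 1 := by ring
    rw [e1, e2, Nat.factorial_succ (k+n+1), Nat.factorial_succ n, Nat.factorial_succ k]
    have h2 : (0:ℝ) < Nat.factorial (k+n+1) := by positivity
    have h3 : (0:ℝ) < Nat.factorial k := by positivity
    have h4 : (0:ℝ) < Nat.factorial n := by positivity
    push_cast
    field_simp
    ring

lemma Jval (k j : ℕ) : (∫ y in (0:ℝ)..1, (1-y)^k * y^j)
    = (Nat.factorial j * Nat.factorial k : ℝ) / Nat.factorial (j + k + 1) := by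
  rw [← beta_nat k j]
  congr 1; ext y; ring

/-- For any integer `m ≥ 3`, the double integral over `{0 ≤ x₂ ≤ x₁ ≤ 1}` of
`(1-x₁)^(m-3) (1-x₂)^(m-3) x₁² x₂² (x₁-x₂)²` equals `12/(m²(m²-4)(m²-1)²)`. -/
theorem double_integral_simplex (m : ℕ) (hm : 3 ≤ m) :
    ∫ p in {q : ℝ × ℝ | 0 ≤ q.2 ∧ q.2 ≤ q.1 ∧ q.1 ≤ 1},
        (1 - p.1) ^ (m - 3) * (1 - p.2) ^ (m - 3) * p.1 ^ 2 * p.2 ^ 2 * (p.1 - p.2) ^ 2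
      = 12 / ((m : ℝ) ^ 2 * ((m : ℝ) ^ 2 - 4) * ((m : ℝ) ^ 2 - 1) ^ 2) := by
  set k := m - 3 with hk
  have hmk : m = k + 3 := by omega
  set F : ℝ × ℝ → ℝ := fun p =>
    (1 - p.1) ^ k * (1 - p.2) ^ k * p.1 ^ 2 * p.2 ^ 2 * (p.1 - p.2) ^ 2 with hF
  have hFc : Continuous F := by fun_prop
  set S : Set (ℝ × ℝ) := {q : ℝ × ℝ | 0 ≤ q.2 ∧ q.2 ≤ q.1 ∧ q.1 ≤ 1} with hS
  set T : Set (ℝ × ℝ) := Set.Icc (0:ℝ) 1 ×ˢ Set.Icc (0:ℝ) 1 with hT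
  have hST : S ⊆ T := by
    rintro ⟨x, y⟩ ⟨h1, h2, h3⟩
    exact ⟨⟨le_trans h1 h2, h3⟩, ⟨h1, le_trans h2 h3⟩⟩
  have hSmeas : MeasurableSet S := by
    apply IsClosed.measurableSet
    have : S = {q : ℝ × ℝ | 0 ≤ q.2} ∩ ({q : ℝ × ℝ | q.2 ≤ q.1} ∩ {q : ℝ × ℝ | q.1 ≤ 1}) := by
      ext q; simp [hS, Set.mem_setOf_eq, and_assoc]
    rw [this]
    exact (isClosed_le continuous_const continuous_snd).inter
      ((isClosed_le continuous_snd continuous_fst).inter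
        (isClosed_le continuous_fst continuous_const))
  have hTcomp : IsCompact T := isCompact_Icc.prod isCompact_Icc
  have hTmeas : MeasurableSet T := hTcomp.measurableSet
  have hFintT : IntegrableOn F T := hFc.continuousOn.integrableOn_compact hTcomp
  have hFintS : IntegrableOn F S := hFintT.mono_set hST
  have hFintTS : IntegrableOn F (T \ S) := hFintT.mono_set Set.diff_subset
  -- the diagonal is null
  have hD : volume {q : ℝ × ℝ | q.1 = q.2} = 0 := by
    have hmeas : MeasurableSet {q : ℝ × ℝ | q.1 = q.2} :=
      measurableSet_eq_fun measurable_fst measurable_snd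
    rw [Measure.volume_eq_prod, Measure.measure_prod_null hmeas]
    have hsl : ∀ x : ℝ, (Prod.mk x ⁻¹' {q : ℝ × ℝ | q.1 = q.2}) = {x} := by
      intro x; ext y; simp [eq_comm]
    filter_upwards with x
    simp [hsl x]
  -- swapping coordinates
  have hswapMP : MeasurePreserving (Prod.swap : ℝ × ℝ → ℝ × ℝ) volume volume := by
    rw [Measure.volume_eq_prod]
    exact Measure.measurePreserving_swap
  have hswapEmb : MeasurableEmbedding (Prod.swap : ℝ × ℝ → ℝ × ℝ) :=
    MeasurableEquiv.prodComm.measurableEmbedding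
  have hTSae : (T \ S : Set (ℝ × ℝ)) =ᵐ[volume] (Prod.swap ⁻¹' S : Set (ℝ × ℝ)) := by
    rw [MeasureTheory.ae_eq_set]
    constructor
    · apply measure_mono_null _ hD
      rintro ⟨x, y⟩ ⟨⟨⟨⟨hx0, hx1⟩, hy0, hy1⟩, hnS⟩, hnS'⟩
      exfalso
      rcases le_total y x with h | h
      · exact hnS ⟨hy0, h, hx1⟩
      · exact hnS' ⟨hx0, h, hy1⟩
    · apply measure_mono_null _ hD
      rintro ⟨x, y⟩ ⟨⟨hx0, hxy, hy1⟩, hns⟩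
      have hmem : (x, y) ∈ S := by
        by_contra hc
        exact hns ⟨⟨⟨hx0, le_trans hxy hy1⟩, le_trans hx0 hxy, hy1⟩, hc⟩
      exact le_antisymm hxy hmem.2.1
  have hTsplit : ∫ p in T, F p = (∫ p in S, F p) + ∫ p in T \ S, F p := by
    rw [← setIntegral_union (disjoint_sdiff_self_right) (hTmeas.diff hSmeas) hFintS hFintTS,
      Set.union_diff_cancel hST]
  have hswapInt : ∫ p in T \ S, F p = ∫ p in S, F p := by
    rw [setIntegral_congr_set hTSae]
    have hsym : ∀ p : ℝ × ℝ, F (Prod.swap p) = F p := by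
      rintro ⟨x, y⟩; simp only [hF, Prod.swap_prod_mk]; ring
    calc ∫ p in Prod.swap ⁻¹' S, F p
        = ∫ p in Prod.swap ⁻¹' S, F (Prod.swap p) :=
          setIntegral_congr_fun (measurable_swap hSmeas) (fun p _ => (hsym p).symm)
      _ = ∫ p in S, F p := hswapMP.setIntegral_preimage_emb hswapEmb F S
  -- iterated integral over the square
  have hIccInt : ∀ h : ℝ → ℝ, (∫ y in Set.Icc (0:ℝ) 1, h y) = ∫ y in (0:ℝ)..1, h y := by
    intro h
    rw [intervalIntegral.integral_of_le zero_le_one, integral_Icc_eq_integral_Ioc]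
  have inner : ∀ x : ℝ, (∫ y in (0:ℝ)..1, F (x, y))
      = (∫ y in (0:ℝ)..1, (1-y)^k * y^2) * ((1-x)^k * x^4)
        - (2 * ∫ y in (0:ℝ)..1, (1-y)^k * y^3) * ((1-x)^k * x^3)
        + (∫ y in (0:ℝ)..1, (1-y)^k * y^4) * ((1-x)^k * x^2) := by
    intro x
    have h1 : ∀ y ∈ Set.uIcc (0:ℝ) 1, F (x, y)
        = (((1-x)^k * x^4) * ((1-y)^k * y^2) - ((1-x)^k * x^3) * (2 * ((1-y)^k * y^3)))
          + ((1-x)^k * x^2) * ((1-y)^k * y^4) := by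
      intro y _; simp only [hF]; ring
    rw [intervalIntegral.integral_congr h1,
      intervalIntegral.integral_add
        (((by fun_prop : Continuous fun y:ℝ => ((1-x)^k * x^4) * ((1-y)^k * y^2)
            - ((1-x)^k * x^3) * (2 * ((1-y)^k * y^3)))).intervalIntegrable _ _)
        ((by fun_prop : Continuous fun y:ℝ =>
            ((1-x)^k * x^2) * ((1-y)^k * y^4)).intervalIntegrable _ _),
      intervalIntegral.integral_sub
        ((by fun_prop : Continuous fun y:ℝ =>
            ((1-x)^k * x^4) * ((1-y)^k * y^2)).intervalIntegrable _ _)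
        ((by fun_prop : Continuous fun y:ℝ =>
            ((1-x)^k * x^3) * (2 * ((1-y)^k * y^3))).intervalIntegrable _ _)]
    simp only [intervalIntegral.integral_const_mul]
    ring
  have hTint : ∫ p in T, F p
      = (∫ y in (0:ℝ)..1, (1-y)^k * y^2) * (∫ y in (0:ℝ)..1, (1-y)^k * y^4)
        - (2 * ∫ y in (0:ℝ)..1, (1-y)^k * y^3) * (∫ y in (0:ℝ)..1, (1-y)^k * y^3)
        + (∫ y in (0:ℝ)..1, (1-y)^k * y^4) * (∫ y in (0:ℝ)..1, (1-y)^k * y^2) := by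
    rw [hT, Measure.volume_eq_prod, setIntegral_prod F (by
      rw [← Measure.volume_eq_prod]; exact hFintT)]
    calc (∫ x in Set.Icc (0:ℝ) 1, ∫ y in Set.Icc (0:ℝ) 1, F (x, y))
        = ∫ x in (0:ℝ)..1, ∫ y in (0:ℝ)..1, F (x, y) := by
          rw [hIccInt fun x => ∫ y in Set.Icc (0:ℝ) 1, F (x, y)]
          exact intervalIntegral.integral_congr fun x _ => hIccInt fun y => F (x, y)
      _ = ∫ x in (0:ℝ)..1,
            ((∫ y in (0:ℝ)..1, (1-y)^k * y^2) * ((1-x)^k * x^4)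
              - (2 * ∫ y in (0:ℝ)..1, (1-y)^k * y^3) * ((1-x)^k * x^3)
              + (∫ y in (0:ℝ)..1, (1-y)^k * y^4) * ((1-x)^k * x^2)) :=
          intervalIntegral.integral_congr fun x _ => inner x
      _ = _ := by
          rw [intervalIntegral.integral_add
              (((by fun_prop : Continuous fun x:ℝ =>
                  (∫ y in (0:ℝ)..1, (1-y)^k * y^2) * ((1-x)^k * x^4)
                  - (2 * ∫ y in (0:ℝ)..1, (1-y)^k * y^3) * ((1-x)^k * x^3))).intervalIntegrable _ _)
              ((by fun_prop : Continuous fun x:ℝ =>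
                  (∫ y in (0:ℝ)..1, (1-y)^k * y^4) * ((1-x)^k * x^2)).intervalIntegrable _ _),
            intervalIntegral.integral_sub
              ((by fun_prop : Continuous fun x:ℝ =>
                  (∫ y in (0:ℝ)..1, (1-y)^k * y^2) * ((1-x)^k * x^4)).intervalIntegrable _ _)
              ((by fun_prop : Continuous fun x:ℝ =>
                  (2 * ∫ y in (0:ℝ)..1, (1-y)^k * y^3) * ((1-x)^k * x^3)).intervalIntegrable _ _)]
          simp only [intervalIntegral.integral_const_mul]
  have hhalf : ∫ p in S, F p
      = ((∫ y in (0:ℝ)..1, (1-y)^k * y^2) * (∫ y in (0:ℝ)..1, (1-y)^k * y^4)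
        - (2 * ∫ y in (0:ℝ)..1, (1-y)^k * y^3) * (∫ y in (0:ℝ)..1, (1-y)^k * y^3)
        + (∫ y in (0:ℝ)..1, (1-y)^k * y^4) * (∫ y in (0:ℝ)..1, (1-y)^k * y^2)) / 2 := by
    rw [← hTint, hTsplit, hswapInt]; ring
  rw [hhalf, Jval k 2, Jval k 3, Jval k 4]
  -- numeric evaluation
  rw [show (2 + k + 1) = k + 3 from by omega, show (3 + k + 1) = k + 4 from by omega,
    show (4 + k + 1) = k + 5 from by omega, hmk]
  have hfact : (0:ℝ) < Nat.factorial k := by positivity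
  have h3 : (Nat.factorial (k+3) : ℝ) = ((k:ℝ)+3)*((k:ℝ)+2)*((k:ℝ)+1)*Nat.factorial k := by
    rw [show k+3 = (k+2)+1 from rfl, Nat.factorial_succ,
      show k+2 = (k+1)+1 from rfl, Nat.factorial_succ, Nat.factorial_succ]
    push_cast; ring
  have h4 : (Nat.factorial (k+4) : ℝ)
      = ((k:ℝ)+4)*(((k:ℝ)+3)*((k:ℝ)+2)*((k:ℝ)+1)*Nat.factorial k) := by
    rw [show k+4 = (k+3)+1 from rfl, Nat.factorial_succ]
    push_cast [h3]; ring
  have h5 : (Nat.factorial (k+5) : ℝ)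
      = ((k:ℝ)+5)*(((k:ℝ)+4)*(((k:ℝ)+3)*((k:ℝ)+2)*((k:ℝ)+1)*Nat.factorial k)) := by
    rw [show k+5 = (k+4)+1 from rfl, Nat.factorial_succ]
    push_cast [h4]; ring
  rw [h3, h4, h5]
  have n1 : ((k:ℝ)+1) ≠ 0 := by positivity
  have n2 : ((k:ℝ)+2) ≠ 0 := by positivity
  have n3 : ((k:ℝ)+3) ≠ 0 := by positivity
  have n4 : ((k:ℝ)+4) ≠ 0 := by positivity
  have n5 : ((k:ℝ)+5) ≠ 0 := by positivity
  have nf : (Nat.factorial k : ℝ) ≠ 0 := ne_of_gt hfact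
  have d1 : ((k:ℝ)+3)^2 - 4 = ((k:ℝ)+1)*((k:ℝ)+5) := by ring
  have d2 : ((k:ℝ)+3)^2 - 1 = ((k:ℝ)+2)*((k:ℝ)+4) := by ring
  push_cast
  rw [d1, d2]
  have e2 : (Nat.factorial 2 : ℝ) = 2 := by norm_num [Nat.factorial]
  have e3 : (Nat.factorial 3 : ℝ) = 6 := by norm_num [Nat.factorial]
  have e4 : (Nat.factorial 4 : ℝ) = 24 := by norm_num [Nat.factorial]
  rw [e2, e3, e4]
  field_simp
  ring
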